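/- Let $\Theta\subset\mathbb{R}^p$ be compact and suppose $D_n(\theta) := \frac{1}{n}\sum_{i=1}^n d_i(\theta)^2 \to D(\theta)$ uniformly on $\Theta$, where each $d_i$ is continuous and $D$ is continuous. Let $(\epsilon_i)$ be i.i.d. with mean $0$, variance $\sigma^2$, and finite fourth moment, and suppose $\limsup_n \frac1n\sum_{i=1}^n \sup_{\theta\in\Theta} d_i(\theta)^4 < \infty$. Then for each fixed $\theta$, $\frac{1}{n}\sum_{i=1}^n (\epsilon_i - d_i(\theta))^2 \to \sigma^2 + D(\theta)$ almost surely. -/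

import Mathlib

open MeasureTheory ProbabilityTheory Filter Finset
open scoped ProbabilityTheory

open scoped ENNReal Topology

section
variable {Ω : Type*} [MeasureSpace Ω] [IsProbabilityMeasure (ℙ : Measure Ω)]

lemma my_integrable_pow4 {f : Ω → ℝ} (hf : MemLp f 4 ℙ) :
    Integrable (fun ω => f ω ^ 4) ℙ := by
  have h := hf.integrable_norm_rpow (by norm_num) (by norm_num)
  refine h.congr (ae_of_all _ fun x => ?_)
  simp only [Real.norm_eq_abs, ENNReal.toReal_ofNat]
  rw [show (4:ℝ) = ((4:ℕ):ℝ) by norm_num,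
    Real.rpow_natCast, ← abs_pow, abs_of_nonneg (by positivity)]

lemma my_integrable_pow_le {f : Ω → ℝ} (hm : AEStronglyMeasurable f ℙ)
    (h4 : Integrable (fun ω => f ω ^ 4) ℙ) {k : ℕ} (hk : k ≤ 4) :
    Integrable (fun ω => f ω ^ k) ℙ := by
  refine Integrable.mono' (h4.add (integrable_const 1))
    ((hm.aemeasurable.pow_const k).aestronglyMeasurable) (ae_of_all _ fun x => ?_)
  simp only [Pi.add_apply, Real.norm_eq_abs, ← pow_abs]
  have hx4 : |f x| ^ 4 = f x ^ 4 := by rw [← abs_pow, abs_of_nonneg (by positivity)]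
  rcases le_total (|f x|) 1 with h | h
  · have : |f x| ^ k ≤ 1 := pow_le_one₀ (abs_nonneg _) h
    nlinarith [pow_nonneg (abs_nonneg (f x)) 4, hx4]
  · have : |f x| ^ k ≤ |f x| ^ 4 := pow_le_pow_right₀ h hk
    nlinarith [hx4]

lemma my_moments (ε : ℕ → Ω → ℝ) (hεmeas : ∀ i, Measurable (ε i))
    (hεindep : iIndepFun ε ℙ)
    (hεid : ∀ i, IdentDistrib (ε i) (ε 0) ℙ ℙ)
    (hεmean : ∫ ω, ε 0 ω = 0)
    (hε4 : MemLp (ε 0) 4 ℙ) (a : ℕ → ℝ) (n : ℕ) :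
    Integrable (fun ω => (∑ i ∈ range n, a i * ε i ω) ^ 4) ℙ ∧
    (∫ ω, (∑ i ∈ range n, a i * ε i ω) ^ 2) =
      (∫ ω, (ε 0 ω) ^ 2) * (∑ i ∈ range n, (a i) ^ 2) ∧
    (∫ ω, (∑ i ∈ range n, a i * ε i ω) ^ 4) ≤
      (∫ ω, (ε 0 ω) ^ 4) * (∑ i ∈ range n, (a i) ^ 4) +
        3 * (∫ ω, (ε 0 ω) ^ 2) ^ 2 * (∑ i ∈ range n, (a i) ^ 2) ^ 2 := by
  set V : ℝ := ∫ ω, (ε 0 ω) ^ 2 with hV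
  set C4 : ℝ := ∫ ω, (ε 0 ω) ^ 4 with hC4
  have hVnn : 0 ≤ V := integral_nonneg fun ω => by positivity
  -- basic facts about each ε i
  have hL4 : ∀ i, MemLp (ε i) 4 ℙ := fun i => (hεid i).symm.memLp_snd hε4
  have hI4 : ∀ i, Integrable (fun ω => ε i ω ^ 4) ℙ := fun i => my_integrable_pow4 (hL4 i)
  have hIpow : ∀ i, ∀ k ≤ 4, Integrable (fun ω => ε i ω ^ k) ℙ := fun i k hk =>
    my_integrable_pow_le (hεmeas i).aestronglyMeasurable (hI4 i) hk
  have hIεi : ∀ i, Integrable (ε i) ℙ := fun i => by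
    have := hIpow i 1 (by norm_num); simpa using this
  have hmean : ∀ i, ∫ ω, ε i ω = 0 := fun i => ((hεid i).integral_eq).trans hεmean
  have hvar : ∀ i, ∫ ω, ε i ω ^ 2 = V := fun i =>
    ((hεid i).comp (measurable_id.pow_const 2)).integral_eq
  have hfour : ∀ i, ∫ ω, ε i ω ^ 4 = C4 := fun i =>
    ((hεid i).comp (measurable_id.pow_const 4)).integral_eq
  -- independence of weighted family
  have hindep' : iIndepFun (fun i ω => a i * ε i ω) ℙ := by
    have := hεindep.comp (fun i (x : ℝ) => a i * x) (fun i => measurable_const_mul (a i))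
    exact this
  induction n with
  | zero => simp [integrable_const]
  | succ n ih =>
    obtain ⟨ihInt, ihSq, ihFour⟩ := ih
    set S : Ω → ℝ := fun ω => ∑ i ∈ range n, a i * ε i ω with hS
    set Z : Ω → ℝ := fun ω => a n * ε n ω with hZ
    have hSmeas : Measurable S := by
      exact Finset.measurable_sum _ fun i _ => (hεmeas i).const_mul (a i)
    have hZmeas : Measurable Z := (hεmeas n).const_mul (a n)
    -- independence of S and Z
    have hSZ : IndepFun S Z ℙ := by
      have h := hindep'.indepFun_sum_range_succ (fun i => (hεmeas i).const_mul (a i)) n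
      have e : (∑ j ∈ range n, fun ω => a j * ε j ω) = S := by
        funext ω; simp [hS, Finset.sum_apply]
      rwa [e] at h
    have hSZpow : ∀ j k : ℕ, IndepFun (fun ω => S ω ^ j) (fun ω => Z ω ^ k) ℙ := fun j k =>
      hSZ.comp (measurable_id.pow_const j) (measurable_id.pow_const k)
    -- integrability of powers of Z
    have hZ4 : Integrable (fun ω => Z ω ^ 4) ℙ := by
      have : (fun ω => Z ω ^ 4) = fun ω => a n ^ 4 * ε n ω ^ 4 := by
        funext ω; simp [hZ]; ring
      rw [this]; exact (hI4 n).const_mul _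
    have hZpow : ∀ k ≤ 4, Integrable (fun ω => Z ω ^ k) ℙ := fun k hk =>
      my_integrable_pow_le hZmeas.aestronglyMeasurable hZ4 hk
    have hSpow : ∀ k ≤ 4, Integrable (fun ω => S ω ^ k) ℙ := fun k hk =>
      my_integrable_pow_le hSmeas.aestronglyMeasurable ihInt hk
    -- integrals of powers of Z
    have hZ1 : ∫ ω, Z ω = 0 := by
      simp only [hZ, integral_const_mul, hmean n, mul_zero]
    have hZ2 : ∫ ω, Z ω ^ 2 = a n ^ 2 * V := by
      have : (fun ω => Z ω ^ 2) = fun ω => a n ^ 2 * ε n ω ^ 2 := by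
        funext ω; simp [hZ]; ring
      rw [this, integral_const_mul, hvar n]
    have hZ4v : ∫ ω, Z ω ^ 4 = a n ^ 4 * C4 := by
      have : (fun ω => Z ω ^ 4) = fun ω => a n ^ 4 * ε n ω ^ 4 := by
        funext ω; simp [hZ]; ring
      rw [this, integral_const_mul, hfour n]
    have hS1 : ∫ ω, S ω = 0 := by
      rw [hS, integral_finset_sum _ (fun i _ => (hIεi i).const_mul (a i))]
      simp only [integral_const_mul]
      exact Finset.sum_eq_zero fun i _ => by rw [hmean i, mul_zero]
    -- integrability of cross products
    have hcross : ∀ j k : ℕ, j ≤ 4 → k ≤ 4 →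
        Integrable (fun ω => S ω ^ j * Z ω ^ k) ℙ := fun j k hj hk =>
      (hSZpow j k).integrable_mul (hSpow j hj) (hZpow k hk)
    have hcrossInt : ∀ j k : ℕ, j ≤ 4 → k ≤ 4 →
        ∫ ω, S ω ^ j * Z ω ^ k = (∫ ω, S ω ^ j) * ∫ ω, Z ω ^ k := fun j k hj hk =>
      (hSZpow j k).integral_fun_mul_eq_mul_integral
        ((hSpow j hj).aestronglyMeasurable) ((hZpow k hk).aestronglyMeasurable)
    -- pointwise identity for the new sum
    have hsum : ∀ ω, ∑ i ∈ range (n + 1), a i * ε i ω = S ω + Z ω := fun ω => by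
      rw [Finset.sum_range_succ]
    -- square part
    have hsq2 : (fun ω => (S ω + Z ω) ^ 2) =
        fun ω => S ω ^ 2 + (2 * (S ω ^ 1 * Z ω ^ 1) + Z ω ^ 2) := by
      funext ω; ring
    have i11 : Integrable (fun ω => 2 * (S ω ^ 1 * Z ω ^ 1)) ℙ := by
      exact (hcross 1 1 (by norm_num) (by norm_num)).const_mul 2
    have itail2 : Integrable (fun ω => 2 * (S ω ^ 1 * Z ω ^ 1) + Z ω ^ 2) ℙ := by
      exact i11.add (hZpow 2 (by norm_num))
    have hsqint : ∫ ω, (S ω + Z ω) ^ 2 = V * (∑ i ∈ range (n + 1), a i ^ 2) := by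
      rw [hsq2, integral_add (hSpow 2 (by norm_num)) itail2,
        integral_add i11 (hZpow 2 (by norm_num)),
        integral_const_mul, hcrossInt 1 1 (by norm_num) (by norm_num)]
      simp only [pow_one, hS1, hZ1, zero_mul, mul_zero, add_zero, zero_add]
      rw [ihSq, hZ2, Finset.sum_range_succ]
      ring
    -- fourth power part
    have hq4 : (fun ω => (S ω + Z ω) ^ 4) = fun ω => S ω ^ 4 +
        (4 * (S ω ^ 3 * Z ω ^ 1) + (6 * (S ω ^ 2 * Z ω ^ 2) +
          (4 * (S ω ^ 1 * Z ω ^ 3) + Z ω ^ 4))) := by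
      funext ω; ring
    have i31 : Integrable (fun ω => 4 * (S ω ^ 3 * Z ω ^ 1)) ℙ := by
      exact (hcross 3 1 (by norm_num) (by norm_num)).const_mul 4
    have i22 : Integrable (fun ω => 6 * (S ω ^ 2 * Z ω ^ 2)) ℙ := by
      exact (hcross 2 2 (by norm_num) (by norm_num)).const_mul 6
    have i13 : Integrable (fun ω => 4 * (S ω ^ 1 * Z ω ^ 3)) ℙ := by
      exact (hcross 1 3 (by norm_num) (by norm_num)).const_mul 4
    have it3 : Integrable (fun ω => 4 * (S ω ^ 1 * Z ω ^ 3) + Z ω ^ 4) ℙ := by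
      exact i13.add hZ4
    have it2 : Integrable (fun ω => 6 * (S ω ^ 2 * Z ω ^ 2) +
        (4 * (S ω ^ 1 * Z ω ^ 3) + Z ω ^ 4)) ℙ := by exact i22.add it3
    have it1 : Integrable (fun ω => 4 * (S ω ^ 3 * Z ω ^ 1) +
        (6 * (S ω ^ 2 * Z ω ^ 2) + (4 * (S ω ^ 1 * Z ω ^ 3) + Z ω ^ 4))) ℙ := by
      exact i31.add it2
    have hint4 : Integrable (fun ω => (S ω + Z ω) ^ 4) ℙ := by
      rw [hq4]; exact (hSpow 4 le_rfl).add it1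
    have hq4int : ∫ ω, (S ω + Z ω) ^ 4 =
        (∫ ω, S ω ^ 4) + (6 * ((∫ ω, S ω ^ 2) * (a n ^ 2 * V)) + a n ^ 4 * C4) := by
      rw [hq4, integral_add (hSpow 4 le_rfl) it1,
        integral_add i31 it2, integral_add i22 it3, integral_add i13 hZ4,
        integral_const_mul, integral_const_mul, integral_const_mul,
        hcrossInt 3 1 (by norm_num) (by norm_num),
        hcrossInt 2 2 (by norm_num) (by norm_num),
        hcrossInt 1 3 (by norm_num) (by norm_num), hZ4v, hZ2]
      simp only [pow_one, hS1, hZ1, zero_mul, mul_zero, add_zero, zero_add]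
    refine ⟨?_, ?_, ?_⟩
    · simp only [hsum]; exact hint4
    · simp only [hsum]; exact hsqint
    · simp only [hsum]
      rw [hq4int, Finset.sum_range_succ (f := fun i => a i ^ 4),
        Finset.sum_range_succ (f := fun i => a i ^ 2), ihSq]
      have h2nn : (0:ℝ) ≤ ∑ i ∈ range n, a i ^ 2 :=
        Finset.sum_nonneg fun i _ => sq_nonneg _
      nlinarith [ihFour, sq_nonneg (a n), sq_nonneg V, sq_nonneg (a n ^ 2),
        mul_nonneg (mul_nonneg hVnn hVnn) (mul_nonneg h2nn (sq_nonneg (a n)))]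

lemma my_ae_tendsto_zero (Y : ℕ → Ω → ℝ) (hmeas : ∀ n, AEMeasurable (Y n) ℙ)
    (hnn : ∀ n ω, 0 ≤ Y n ω) (hint : ∀ n, Integrable (Y n) ℙ)
    (hsum : Summable fun n => ∫ ω, Y n ω) :
    ∀ᵐ ω ∂(ℙ : Measure Ω), Tendsto (fun n => Y n ω) atTop (𝓝 0) := by
  set f : ℕ → Ω → ℝ≥0∞ := fun n ω => ENNReal.ofReal (Y n ω) with hf
  have hfm : ∀ n, AEMeasurable (f n) ℙ := fun n => (hmeas n).ennreal_ofReal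
  have h1 : ∫⁻ ω, ∑' n, f n ω ∂ℙ = ∑' n, ∫⁻ ω, f n ω ∂ℙ := lintegral_tsum hfm
  have h2 : ∀ n, ∫⁻ ω, f n ω ∂ℙ = ENNReal.ofReal (∫ ω, Y n ω) := fun n =>
    (ofReal_integral_eq_lintegral_ofReal (hint n) (ae_of_all _ (hnn n))).symm
  have h3 : ∫⁻ ω, ∑' n, f n ω ∂ℙ ≠ ∞ := by
    rw [h1]
    have : ∑' n, ∫⁻ ω, f n ω ∂ℙ = ENNReal.ofReal (∑' n, ∫ ω, Y n ω) := by
      rw [ENNReal.ofReal_tsum_of_nonneg (fun n => integral_nonneg (hnn n)) hsum]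
      exact tsum_congr h2
    rw [this]; exact ENNReal.ofReal_ne_top
  have h4 : ∀ᵐ ω ∂(ℙ : Measure Ω), ∑' n, f n ω < ∞ :=
    ae_lt_top' (AEMeasurable.ennreal_tsum hfm) h3
  filter_upwards [h4] with ω hω
  have h5 : Tendsto (fun n => f n ω) atTop (𝓝 0) :=
    ENNReal.tendsto_atTop_zero_of_tsum_ne_top hω.ne
  have h6 : Tendsto (fun n => (f n ω).toReal) atTop (𝓝 (0 : ℝ≥0∞).toReal) :=
    (ENNReal.tendsto_toReal ENNReal.zero_ne_top).comp h5
  simp only [ENNReal.toReal_zero] at h6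
  exact h6.congr fun n => ENNReal.toReal_ofReal (hnn n ω)


end

set_option maxHeartbeats 1000000 in
/-- if `D_n(θ) = n⁻¹ ∑ d_i(θ)² → D(θ)` uniformly on a compact
`Θ`, the errors are i.i.d. with mean 0, variance σ² and finite fourth moment,
and the fourth powers of `sup_θ |d_i|` are Cesàro bounded, then for each fixed
`θ ∈ Θ`, `n⁻¹ ∑ (ε_i - d_i(θ))² → σ² + D(θ)` almost surely. -/
theorem stmt9 {Ω : Type*} [MeasureSpace Ω] [IsProbabilityMeasure (ℙ : Measure Ω)]
    {p : ℕ} (Θ : Set (Fin p → ℝ)) (hΘ : IsCompact Θ)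
    (d : ℕ → (Fin p → ℝ) → ℝ) (hdcont : ∀ i, ContinuousOn (d i) Θ)
    (D : (Fin p → ℝ) → ℝ) (hDcont : ContinuousOn D Θ)
    (hunif : TendstoUniformlyOn
      (fun (n : ℕ) (θ : Fin p → ℝ) => (n : ℝ)⁻¹ * ∑ i ∈ range n, (d i θ) ^ 2)
      D atTop Θ)
    (ε : ℕ → Ω → ℝ) (σ : ℝ)
    (hεmeas : ∀ i, Measurable (ε i))
    (hεindep : iIndepFun ε ℙ)
    (hεid : ∀ i, IdentDistrib (ε i) (ε 0) ℙ ℙ)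
    (hεmean : ∫ ω, ε 0 ω = 0)
    (hεvar : ∫ ω, (ε 0 ω) ^ 2 = σ ^ 2)
    (hε4 : MemLp (ε 0) 4 ℙ)
    (Md : ℝ)
    (hd4 : ∀ᶠ (n : ℕ) in atTop,
      (n : ℝ)⁻¹ * ∑ i ∈ range n, (⨆ θ : Θ, (d i (θ : Fin p → ℝ)) ^ 4) ≤ Md) :
    ∀ θ ∈ Θ, ∀ᵐ ω ∂(ℙ : Measure Ω),
      Tendsto (fun (n : ℕ) => (n : ℝ)⁻¹ * ∑ i ∈ range n, (ε i ω - d i θ) ^ 2)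
        atTop (nhds (σ ^ 2 + D θ)) := by
  intro θ hθ
  -- Part 1 : strong law for ε²
  have hsqint : Integrable (fun ω => ε 0 ω ^ 2) ℙ :=
    (hε4.mono_exponent (by norm_num)).integrable_sq
  have hAae : ∀ᵐ ω ∂(ℙ : Measure Ω),
      Tendsto (fun n : ℕ => (n : ℝ)⁻¹ * ∑ i ∈ range n, ε i ω ^ 2) atTop (𝓝 (σ ^ 2)) := by
    have h := strong_law_ae_real (μ := ℙ) (fun i ω => ε i ω ^ 2) hsqint
      (fun i j hij => ((hεindep.indepFun hij).comp
        (measurable_id.pow_const 2) (measurable_id.pow_const 2)))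
      (fun i => (hεid i).comp (measurable_id.pow_const 2))
    rw [show (∫ ω, ε 0 ω ^ 2 ∂ℙ) = σ ^ 2 from hεvar] at h
    filter_upwards [h] with ω hω
    exact hω.congr fun n => div_eq_inv_mul _ _
  -- Part 2 : weighted sums tend to zero
  set V : ℝ := ∫ ω, (ε 0 ω) ^ 2 with hVdef
  set C4 : ℝ := ∫ ω, (ε 0 ω) ^ 4 with hC4def
  have hC4nn : 0 ≤ C4 := integral_nonneg fun ω => by positivity
  set K : ℝ := |D θ| + 1 with hKdef
  have hM := my_moments ε hεmeas hεindep hεid hεmean hε4 (fun i => d i θ)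
  have htendA2 : Tendsto (fun n : ℕ => (n : ℝ)⁻¹ * ∑ i ∈ range n, (d i θ) ^ 2)
      atTop (𝓝 (D θ)) := hunif.tendsto_at hθ
  have hA2ev : ∀ᶠ n : ℕ in atTop, ∑ i ∈ range n, (d i θ) ^ 2 ≤ K * n := by
    have h1 : ∀ᶠ n : ℕ in atTop,
        (n : ℝ)⁻¹ * ∑ i ∈ range n, (d i θ) ^ 2 < K :=
      htendA2.eventually_lt_const (by simp [hKdef]; nlinarith [abs_nonneg (D θ), le_abs_self (D θ)])
    filter_upwards [h1, eventually_ge_atTop 1] with n hn hn1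
    have hnpos : (0 : ℝ) < n := by exact_mod_cast hn1
    have := mul_le_mul_of_nonneg_left hn.le hnpos.le
    calc ∑ i ∈ range n, (d i θ) ^ 2
        = (n : ℝ) * ((n : ℝ)⁻¹ * ∑ i ∈ range n, (d i θ) ^ 2) := by
          field_simp
      _ ≤ (n : ℝ) * K := this
      _ = K * n := mul_comm _ _
  have hsup : ∀ i, (d i θ) ^ 4 ≤ ⨆ θ' : Θ, (d i (θ' : Fin p → ℝ)) ^ 4 := by
    intro i
    have : CompactSpace Θ := isCompact_iff_compactSpace.mp hΘ
    have hc : Continuous fun θ' : Θ => (d i (θ' : Fin p → ℝ)) ^ 4 :=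
      ((hdcont i).restrict).pow 4
    exact le_ciSup (isCompact_range hc).bddAbove ⟨θ, hθ⟩
  have hsupnn : ∀ i, 0 ≤ ⨆ θ' : Θ, (d i (θ' : Fin p → ℝ)) ^ 4 :=
    fun i => le_trans (by positivity) (hsup i)
  have hMd0 : 0 ≤ Md := by
    obtain ⟨n, hn, hn1⟩ := (hd4.and (eventually_ge_atTop 1)).exists
    refine le_trans ?_ hn
    have : (0:ℝ) ≤ ∑ i ∈ range n, ⨆ θ' : Θ, (d i (θ' : Fin p → ℝ)) ^ 4 :=
      Finset.sum_nonneg fun i _ => hsupnn i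
    positivity
  have hA4ev : ∀ᶠ n : ℕ in atTop, ∑ i ∈ range n, (d i θ) ^ 4 ≤ Md * n := by
    filter_upwards [hd4, eventually_ge_atTop 1] with n hn hn1
    have hnpos : (0 : ℝ) < n := by exact_mod_cast hn1
    have h2 : ∑ i ∈ range n, (d i θ) ^ 4
        ≤ ∑ i ∈ range n, ⨆ θ' : Θ, (d i (θ' : Fin p → ℝ)) ^ 4 :=
      Finset.sum_le_sum fun i _ => hsup i
    have h3 := mul_le_mul_of_nonneg_left hn hnpos.le
    rw [← mul_assoc, mul_inv_cancel₀ hnpos.ne', one_mul] at h3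
    calc ∑ i ∈ range n, (d i θ) ^ 4 ≤ _ := h2
      _ ≤ (n : ℝ) * Md := h3
      _ = Md * n := mul_comm _ _
  set Y : ℕ → Ω → ℝ :=
    fun n ω => ((n : ℝ)⁻¹) ^ 4 * (∑ i ∈ range n, d i θ * ε i ω) ^ 4 with hYdef
  have hYint : ∀ n, Integrable (Y n) ℙ := fun n => ((hM n).1).const_mul _
  have hYnn : ∀ n ω, 0 ≤ Y n ω := fun n ω => by
    simp only [hYdef]; positivity
  have hYmeas : ∀ n, AEMeasurable (Y n) ℙ := fun n => (hYint n).aemeasurable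
  set B0 : ℝ := C4 * Md + 3 * (σ ^ 2) ^ 2 * K ^ 2 with hB0def
  have hbound : ∀ᶠ n : ℕ in atTop, ∫ ω, Y n ω ≤ B0 * (1 / (n : ℝ) ^ 2) := by
    filter_upwards [hA2ev, hA4ev, eventually_ge_atTop 1] with n hA2 hA4 hn1
    have hnpos : (0 : ℝ) < n := by exact_mod_cast hn1
    have hn1' : (1 : ℝ) ≤ n := by exact_mod_cast hn1
    have hA2nn : (0:ℝ) ≤ ∑ i ∈ range n, (d i θ) ^ 2 :=
      Finset.sum_nonneg fun i _ => sq_nonneg _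
    have e1 : ∫ ω, Y n ω
        = ((n : ℝ)⁻¹) ^ 4 * ∫ ω, (∑ i ∈ range n, d i θ * ε i ω) ^ 4 := by
      rw [hYdef]; exact integral_const_mul _ _
    have e2 : ∫ ω, (∑ i ∈ range n, d i θ * ε i ω) ^ 4
        ≤ C4 * (Md * n) + 3 * V ^ 2 * (K * n) ^ 2 := by
      refine le_trans (hM n).2.2 ?_
      have b1 : C4 * (∑ i ∈ range n, (d i θ) ^ 4) ≤ C4 * (Md * n) :=
        mul_le_mul_of_nonneg_left hA4 hC4nn
      have b2 : (∑ i ∈ range n, (d i θ) ^ 2) ^ 2 ≤ (K * n) ^ 2 :=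
        pow_le_pow_left₀ hA2nn hA2 2
      nlinarith [sq_nonneg V]
    have hVσ : V = σ ^ 2 := hεvar
    rw [hVσ] at e2
    rw [e1]
    have e3 : ((n : ℝ)⁻¹) ^ 4 * (C4 * (Md * n) + 3 * (σ ^ 2) ^ 2 * (K * n) ^ 2)
        = C4 * Md * ((n : ℝ) ^ 3)⁻¹ + 3 * (σ ^ 2) ^ 2 * K ^ 2 * ((n : ℝ) ^ 2)⁻¹ := by
      field_simp
    have e4 : ((n : ℝ) ^ 3)⁻¹ ≤ ((n : ℝ) ^ 2)⁻¹ := by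
      apply inv_anti₀ (by positivity)
      calc (n:ℝ)^2 = (n:ℝ)^2 * 1 := by ring
        _ ≤ (n:ℝ)^2 * n := by nlinarith
        _ = (n:ℝ)^3 := by ring
    have e5 : ∫ ω, (∑ i ∈ range n, d i θ * ε i ω) ^ 4 ∂ℙ
        ≤ C4 * (Md * n) + 3 * (σ ^ 2) ^ 2 * (K * n) ^ 2 := e2
    calc ((n : ℝ)⁻¹) ^ 4 * ∫ ω, (∑ i ∈ range n, d i θ * ε i ω) ^ 4
        ≤ ((n : ℝ)⁻¹) ^ 4 * (C4 * (Md * n) + 3 * (σ ^ 2) ^ 2 * (K * n) ^ 2) := by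
          apply mul_le_mul_of_nonneg_left e5 (by positivity)
      _ = C4 * Md * ((n : ℝ) ^ 3)⁻¹ + 3 * (σ ^ 2) ^ 2 * K ^ 2 * ((n : ℝ) ^ 2)⁻¹ := e3
      _ ≤ C4 * Md * ((n : ℝ) ^ 2)⁻¹ + 3 * (σ ^ 2) ^ 2 * K ^ 2 * ((n : ℝ) ^ 2)⁻¹ := by
          have h0 : 0 ≤ C4 * Md := mul_nonneg hC4nn hMd0
          have := mul_le_mul_of_nonneg_left e4 h0
          linarith
      _ = B0 * (1 / (n : ℝ) ^ 2) := by rw [hB0def]; field_simp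
  have hsumY : Summable fun n => ∫ ω, Y n ω := by
    have hg : Summable (fun n : ℕ => 1 / (n : ℝ) ^ 2) :=
      Real.summable_one_div_nat_pow.mpr one_lt_two
    refine summable_of_isBigO_nat hg (Asymptotics.isBigO_iff.mpr ⟨|B0|, ?_⟩)
    filter_upwards [hbound] with n hn
    rw [Real.norm_eq_abs, Real.norm_eq_abs,
      abs_of_nonneg (integral_nonneg (hYnn n))]
    calc ∫ ω, Y n ω ≤ B0 * (1 / (n : ℝ) ^ 2) := hn
      _ ≤ |B0| * |1 / (n : ℝ) ^ 2| := by
          apply mul_le_mul (le_abs_self _) (le_abs_self _) (by positivity) (abs_nonneg _)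
  have hBae : ∀ᵐ ω ∂(ℙ : Measure Ω),
      Tendsto (fun n : ℕ => (n : ℝ)⁻¹ * ∑ i ∈ range n, d i θ * ε i ω) atTop (𝓝 0) := by
    filter_upwards [my_ae_tendsto_zero Y hYmeas hYnn hYint hsumY] with ω hω
    set T : ℕ → ℝ := fun n : ℕ => (n : ℝ)⁻¹ * ∑ i ∈ range n, d i θ * ε i ω with hT
    have hYT : ∀ n, Y n ω = ((T n) ^ 2) ^ 2 := fun n => by
      simp only [hYdef, hT]; ring
    have h2 : Tendsto (fun n => Real.sqrt (Y n ω)) atTop (𝓝 (Real.sqrt 0)) :=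
      (Real.continuous_sqrt.tendsto _).comp hω
    rw [Real.sqrt_zero] at h2
    have h3 : Tendsto (fun n => (T n) ^ 2) atTop (𝓝 0) := by
      refine h2.congr fun n => ?_
      rw [hYT n, Real.sqrt_sq (sq_nonneg _)]
    have h4 : Tendsto (fun n => Real.sqrt ((T n) ^ 2)) atTop (𝓝 (Real.sqrt 0)) :=
      (Real.continuous_sqrt.tendsto _).comp h3
    rw [Real.sqrt_zero] at h4
    have h5 : Tendsto (fun n => |T n|) atTop (𝓝 0) := by
      refine h4.congr fun n => ?_
      rw [Real.sqrt_sq_eq_abs]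
    exact (tendsto_zero_iff_abs_tendsto_zero T).mpr h5
  -- Part 3 : deterministic part
  have hC : Tendsto (fun n : ℕ => (n : ℝ)⁻¹ * ∑ i ∈ range n, (d i θ) ^ 2)
      atTop (𝓝 (D θ)) := hunif.tendsto_at hθ
  -- combine
  filter_upwards [hAae, hBae] with ω h1 h2
  have hcomb := (h1.sub ((h2.const_mul 2))).add hC
  rw [show σ ^ 2 + D θ = σ ^ 2 - 2 * 0 + D θ by ring]
  refine hcomb.congr fun n => ?_
  have hpt : ∑ i ∈ range n, (ε i ω - d i θ) ^ 2
      = ∑ i ∈ range n, (ε i ω ^ 2 - 2 * (d i θ * ε i ω) + (d i θ) ^ 2) :=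
    Finset.sum_congr rfl fun i _ => by ring
  rw [hpt, Finset.sum_add_distrib, Finset.sum_sub_distrib, ← Finset.mul_sum]
  ring
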